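/- The function f(z₁,z₂,z₃,z₄) = 5πi - (π²+z₁²)/4 + z₃ - 2z₄ + (1/4)·(z₁-πi)·(z₂-z₁+z₃+z₄) + (z₁-πi)·e^{3(z₂-z₁)+5z₃+z₄+7} - (e^{3(z₂-z₁)+5z₃+z₄+7} + (1/4)·(z₂-z₁+z₃+z₄-2πi))² on ℂ⁴ satisfies (∂f/∂z₁ + ∂f/∂z₂)² + f(z₁+πi, z₂+2πi, z₃-πi, z₄+2πi) = z₃ - 2z₄ identically on ℂ⁴. -/

import Mathlib

noncomputable def f5 (z₁ z₂ z₃ z₄ : ℂ) : ℂ :=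
  5 * (Real.pi : ℂ) * Complex.I - ((Real.pi : ℂ) ^ 2 + z₁ ^ 2) / 4 + z₃ - 2 * z₄
    + (1 / 4) * (z₁ - (Real.pi : ℂ) * Complex.I) * (z₂ - z₁ + z₃ + z₄)
    + (z₁ - (Real.pi : ℂ) * Complex.I) * Complex.exp (3 * (z₂ - z₁) + 5 * z₃ + z₄ + 7)
    - (Complex.exp (3 * (z₂ - z₁) + 5 * z₃ + z₄ + 7)
        + (1 / 4) * (z₂ - z₁ + z₃ + z₄ - 2 * (Real.pi : ℂ) * Complex.I)) ^ 2

theorem stmt_5 : ∀ z₁ z₂ z₃ z₄ : ℂ,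
    (deriv (fun w => f5 w z₂ z₃ z₄) z₁ + deriv (fun w => f5 z₁ w z₃ z₄) z₂) ^ 2
      + f5 (z₁ + Real.pi * Complex.I) (z₂ + 2 * Real.pi * Complex.I)
          (z₃ - Real.pi * Complex.I) (z₄ + 2 * Real.pi * Complex.I)
      = z₃ - 2 * z₄ := by
  intro z₁ z₂ z₃ z₄
  -- derivative in the first variable
  have hu1 : HasDerivAt (fun w : ℂ => 3 * (z₂ - w) + 5 * z₃ + z₄ + 7) (-3) z₁ := by
    have h := (((((hasDerivAt_id z₁).const_sub z₂).const_mul (3:ℂ)).add_const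
      (5 * z₃)).add_const z₄).add_const 7
    simpa using h
  have hexp1 : HasDerivAt (fun w : ℂ => Complex.exp (3 * (z₂ - w) + 5 * z₃ + z₄ + 7))
      (Complex.exp (3 * (z₂ - z₁) + 5 * z₃ + z₄ + 7) * (-3)) z₁ := hu1.cexp
  have hB : HasDerivAt (fun w : ℂ => ((Real.pi : ℂ) ^ 2 + w ^ 2) / 4)
      ((2 * z₁ ^ 1) / 4) z₁ := ((hasDerivAt_pow 2 z₁).const_add _).div_const 4
  have hC : HasDerivAt (fun w : ℂ =>
      (1 / 4) * (w - (Real.pi : ℂ) * Complex.I) * (z₂ - w + z₃ + z₄))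
      ((1 / 4 * 1) * (z₂ - z₁ + z₃ + z₄)
        + (1 / 4) * (z₁ - (Real.pi : ℂ) * Complex.I) * (-1 + 0 + 0)) z₁ := by
    have hf : HasDerivAt (fun w : ℂ => (1 / 4) * (w - (Real.pi : ℂ) * Complex.I)) (1 / 4 * 1) z₁ :=
      ((hasDerivAt_id z₁).sub_const _).const_mul _
    have hg : HasDerivAt (fun w : ℂ => z₂ - w + z₃ + z₄) (-1 + 0 + 0) z₁ := by
      simpa using (((hasDerivAt_id z₁).const_sub z₂).add_const z₃).add_const z₄
    exact hf.mul hg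
  have hD : HasDerivAt (fun w : ℂ =>
      (w - (Real.pi : ℂ) * Complex.I) * Complex.exp (3 * (z₂ - w) + 5 * z₃ + z₄ + 7))
      (1 * Complex.exp (3 * (z₂ - z₁) + 5 * z₃ + z₄ + 7)
        + (z₁ - (Real.pi : ℂ) * Complex.I)
          * (Complex.exp (3 * (z₂ - z₁) + 5 * z₃ + z₄ + 7) * (-3))) z₁ :=
    ((hasDerivAt_id z₁).sub_const _).mul hexp1
  have hGin : HasDerivAt (fun w : ℂ =>
      Complex.exp (3 * (z₂ - w) + 5 * z₃ + z₄ + 7)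
        + (1 / 4) * (z₂ - w + z₃ + z₄ - 2 * (Real.pi : ℂ) * Complex.I))
      (Complex.exp (3 * (z₂ - z₁) + 5 * z₃ + z₄ + 7) * (-3) + 1 / 4 * (-1)) z₁ := by
    have hg : HasDerivAt (fun w : ℂ =>
        (1 / 4) * (z₂ - w + z₃ + z₄ - 2 * (Real.pi : ℂ) * Complex.I)) (1 / 4 * (-1)) z₁ := by
      have := (((((hasDerivAt_id z₁).const_sub z₂).add_const z₃).add_const z₄).sub_const
        (2 * (Real.pi : ℂ) * Complex.I)).const_mul (1 / 4 : ℂ)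
      simpa using this
    exact hexp1.add hg
  have hd1 := (((((hB.const_sub (5 * (Real.pi : ℂ) * Complex.I)).add_const z₃).sub_const
    (2 * z₄)).add hC).add hD).sub (hGin.pow 2)
  -- derivative in the second variable
  have hu2 : HasDerivAt (fun w : ℂ => 3 * (w - z₁) + 5 * z₃ + z₄ + 7) (3) z₂ := by
    have h := (((((hasDerivAt_id z₂).sub_const z₁).const_mul (3:ℂ)).add_const
      (5 * z₃)).add_const z₄).add_const 7
    simpa using h
  have hexp2 : HasDerivAt (fun w : ℂ => Complex.exp (3 * (w - z₁) + 5 * z₃ + z₄ + 7))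
      (Complex.exp (3 * (z₂ - z₁) + 5 * z₃ + z₄ + 7) * 3) z₂ := hu2.cexp
  have hC2 : HasDerivAt (fun w : ℂ =>
      (1 / 4) * (z₁ - (Real.pi : ℂ) * Complex.I) * (w - z₁ + z₃ + z₄))
      ((1 / 4) * (z₁ - (Real.pi : ℂ) * Complex.I) * 1) z₂ := by
    have hg : HasDerivAt (fun w : ℂ => w - z₁ + z₃ + z₄) 1 z₂ := by
      simpa using (((hasDerivAt_id z₂).sub_const z₁).add_const z₃).add_const z₄
    simpa using hg.const_mul ((1 / 4) * (z₁ - (Real.pi : ℂ) * Complex.I))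
  have hD2 : HasDerivAt (fun w : ℂ =>
      (z₁ - (Real.pi : ℂ) * Complex.I) * Complex.exp (3 * (w - z₁) + 5 * z₃ + z₄ + 7))
      ((z₁ - (Real.pi : ℂ) * Complex.I)
        * (Complex.exp (3 * (z₂ - z₁) + 5 * z₃ + z₄ + 7) * 3)) z₂ :=
    hexp2.const_mul _
  have hGin2 : HasDerivAt (fun w : ℂ =>
      Complex.exp (3 * (w - z₁) + 5 * z₃ + z₄ + 7)
        + (1 / 4) * (w - z₁ + z₃ + z₄ - 2 * (Real.pi : ℂ) * Complex.I))
      (Complex.exp (3 * (z₂ - z₁) + 5 * z₃ + z₄ + 7) * 3 + 1 / 4 * 1) z₂ := by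
    have hg : HasDerivAt (fun w : ℂ =>
        (1 / 4) * (w - z₁ + z₃ + z₄ - 2 * (Real.pi : ℂ) * Complex.I)) (1 / 4 * 1) z₂ := by
      have := (((((hasDerivAt_id z₂).sub_const z₁).add_const z₃).add_const z₄).sub_const
        (2 * (Real.pi : ℂ) * Complex.I)).const_mul (1 / 4 : ℂ)
      simpa using this
    exact hexp2.add hg
  have hd2 := ((((hC2.const_add (5 * (Real.pi : ℂ) * Complex.I
      - ((Real.pi : ℂ) ^ 2 + z₁ ^ 2) / 4 + z₃ - 2 * z₄)).add hD2)).sub (hGin2.pow 2))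
  simp only [f5]
  erw [hd1.deriv, hd2.deriv]
  rw [show 3 * (z₂ + 2 * (Real.pi : ℂ) * Complex.I - (z₁ + (Real.pi : ℂ) * Complex.I))
        + 5 * (z₃ - (Real.pi : ℂ) * Complex.I) + (z₄ + 2 * (Real.pi : ℂ) * Complex.I) + 7
      = 3 * (z₂ - z₁) + 5 * z₃ + z₄ + 7 from by ring]
  linear_combination (-(Real.pi : ℂ) ^ 2 / 4) * Complex.I_sq
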